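/- Let G be a factor graph satisfying the Plausibility Assumption with parameter ζ, and suppose f is a constraint-vertex with neighborhood S = N(f), |S| ≤ K, and let H_f be the subgraph induced by all edges incident to f (so R(H_f) = τ when deg(f) = τ and all neighbors are leaves). If there exists a small S-closed τ-subgraph H not contained in H_f, then H_f ∪ H is a nonempty τ-subgraph with at most 2·SMALL constraints, at least one leaf variable all of whose leaves are adjacent to f, and revenue R(H_f ∪ H) ≤ τ − 1. -/
import Mathlib


open scoped Classical
open Finset

namespace CSP

variable {Cn Vr : Type*} [Fintype Cn] [Fintype Vr] [DecidableEq Cn] [DecidableEq Vr]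

/-- Constraint-vertices of an edge-induced subgraph (given as a set of edges). -/
def consOf (H : Finset (Cn × Vr)) : Finset Cn := H.image Prod.fst

/-- Variable-vertices of an edge-induced subgraph. -/
def vbls (H : Finset (Cn × Vr)) : Finset Vr := H.image Prod.snd

/-- Degree of a constraint-vertex within `H`. -/
def degC (H : Finset (Cn × Vr)) (f : Cn) : ℕ := (H.filter fun e => e.1 = f).card

/-- Degree of a variable-vertex within `H`. -/
def degV (H : Finset (Cn × Vr)) (v : Vr) : ℕ := (H.filter fun e => e.2 = v).card

/-- Leaf variable-vertices: those of degree exactly 1. -/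
def leaves (H : Finset (Cn × Vr)) : Finset Vr := (vbls H).filter fun v => degV H v = 1

/-- Revenue: one credit per leaf variable-vertex, minus a debit for each excess edge
(edges beyond 2 at a variable-vertex, beyond `τ` at a constraint-vertex). -/
def revenue (τ : ℕ) (H : Finset (Cn × Vr)) : ℝ :=
  ((leaves H).card : ℝ)
    - (((∑ v ∈ vbls H, (degV H v - 2)) + ∑ f ∈ consOf H, (degC H f - τ) : ℕ) : ℝ)

/-- A `τ`-subgraph: every constraint-vertex has degree at least `τ`. -/
def IsTau (τ : ℕ) (H : Finset (Cn × Vr)) : Prop := ∀ f ∈ consOf H, τ ≤ degC H f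

/-- Plausibility: income `R(H) - ζ·|consOf H|` is nonnegative. -/
def Plausible (τ : ℕ) (ζ : ℝ) (H : Finset (Cn × Vr)) : Prop :=
  ζ * ((consOf H).card : ℝ) ≤ revenue τ H

/-- The Plausibility Assumption for a factor graph with edge set `E`. -/
def PlausibilityAssumption (τ : ℕ) (ζ : ℝ) (SMALL : ℕ) (E : Finset (Cn × Vr)) : Prop :=
  ∀ H ⊆ E, IsTau τ H → (consOf H).card ≤ 2 * SMALL → Plausible τ ζ H

/-- `S`-closed: a `τ`-subgraph all of whose leaf variable-vertices lie in `S`. -/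
def SClosed (τ : ℕ) (S : Finset Vr) (H : Finset (Cn × Vr)) : Prop :=
  IsTau τ H ∧ leaves H ⊆ S

/-- The closure of `S`: the union of all small `S`-closed `τ`-subgraphs of `E`. -/
noncomputable def closure (τ SMALL : ℕ) (E : Finset (Cn × Vr)) (S : Finset Vr) :
    Finset (Cn × Vr) :=
  (E.powerset.filter fun H => SClosed τ S H ∧ (consOf H).card ≤ SMALL).sup id

end CSP

open CSP

section Aux

variable {Cn Vr : Type*} [Fintype Cn] [Fintype Vr] [DecidableEq Cn] [DecidableEq Vr]

lemma mem_consOf' {H : Finset (Cn × Vr)} {g : Cn} : g ∈ consOf H ↔ ∃ e ∈ H, e.1 = g :=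
  Finset.mem_image

lemma mem_vbls' {H : Finset (Cn × Vr)} {v : Vr} : v ∈ vbls H ↔ ∃ e ∈ H, e.2 = v :=
  Finset.mem_image

lemma degV_pos_of_mem {H : Finset (Cn × Vr)} {v : Vr} (h : v ∈ vbls H) : 0 < degV H v := by
  obtain ⟨e, he, hv⟩ := mem_vbls'.1 h
  exact Finset.card_pos.2 ⟨e, Finset.mem_filter.2 ⟨he, hv⟩⟩

lemma empty_of_no_leaves (τ SMALL : ℕ) (ζ : ℝ) (hζ0 : 0 < ζ)
    (E : Finset (Cn × Vr)) (hPA : PlausibilityAssumption τ ζ SMALL E)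
    (W : Finset (Cn × Vr)) (hWE : W ⊆ E) (hWt : IsTau τ W)
    (hWc : (consOf W).card ≤ 2 * SMALL) (hL : leaves W = ∅) : W = ∅ := by
  have hrev : revenue τ W ≤ 0 := by
    unfold revenue
    rw [hL]
    simp only [Finset.card_empty, Nat.cast_zero, zero_sub, neg_nonpos]
    positivity
  have h2 : ζ * ((consOf W).card : ℝ) ≤ 0 := le_trans (hPA W hWE hWt hWc) hrev
  have hc : (consOf W).card = 0 := by
    by_contra hne
    have h3 : (0 : ℝ) < ((consOf W).card : ℝ) := by
      exact_mod_cast Nat.pos_of_ne_zero hne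
    nlinarith
  have : consOf W = ∅ := Finset.card_eq_zero.1 hc
  ext e
  simp only [Finset.notMem_empty, iff_false]
  intro he
  have : e.1 ∈ consOf W := mem_consOf'.2 ⟨e, he, rfl⟩
  simp [‹consOf W = ∅›] at this

end Aux


/-- If `H` is a small `S`-closed τ-subgraph not contained in `H_f` (the star of the
constraint `f`, whose neighborhood is `S = N(f)`), then `H_f ∪ H` is a nonempty
τ-subgraph with at most `2·SMALL` constraints, having at least one leaf, all leaves
adjacent to `f`, and revenue at most `τ − 1`. -/
theorem stmt_18 {Cn Vr : Type*} [Fintype Cn] [Fintype Vr] [DecidableEq Cn] [DecidableEq Vr]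
    (τ SMALL K : ℕ) (hτ : 3 ≤ τ) (hSMALL : 1 ≤ SMALL)
    (ζ : ℝ) (hζ0 : 0 < ζ) (hζ1 : ζ < 1)
    (E : Finset (Cn × Vr)) (hPA : PlausibilityAssumption τ ζ SMALL E)
    (f : Cn) (Hf : Finset (Cn × Vr)) (hHf : Hf = E.filter fun e => e.1 = f)
    (S : Finset Vr) (hSdef : S = vbls Hf) (hSK : S.card ≤ K)
    (hdeg : τ ≤ Hf.card)
    (H : Finset (Cn × Vr)) (hHE : H ⊆ E) (hHtau : IsTau τ H)
    (hHsmall : (consOf H).card ≤ SMALL) (hHclosed : SClosed τ S H)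
    (hHnot : ¬ H ⊆ Hf) :
    Hf ∪ H ≠ ∅ ∧ IsTau τ (Hf ∪ H) ∧ (consOf (Hf ∪ H)).card ≤ 2 * SMALL ∧
      (leaves (Hf ∪ H)).Nonempty ∧ leaves (Hf ∪ H) ⊆ S ∧
      revenue τ (Hf ∪ H) ≤ (τ : ℝ) - 1 := by
  -- Basic facts about Hf
  have hHfE : Hf ⊆ E := by rw [hHf]; exact Finset.filter_subset _ _
  have hHfF : ∀ e ∈ Hf, e.1 = f := by
    intro e he; rw [hHf] at he; exact (Finset.mem_filter.1 he).2
  have hHfmem : ∀ e ∈ E, e.1 = f → e ∈ Hf := by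
    intro e he h1; rw [hHf]; exact Finset.mem_filter.2 ⟨he, h1⟩
  have hUE : Hf ∪ H ⊆ E := Finset.union_subset hHfE hHE
  -- edges of the union with first coordinate f are exactly Hf
  have hUf : (Hf ∪ H).filter (fun e => e.1 = f) = Hf := by
    ext e
    simp only [Finset.mem_filter, Finset.mem_union]
    constructor
    · rintro ⟨h1 | h1, h2⟩
      · exact h1
      · exact hHfmem e (hHE h1) h2
    · intro h1; exact ⟨Or.inl h1, hHfF e h1⟩
  have hdegCf : degC (Hf ∪ H) f = Hf.card := by rw [degC, hUf]
  -- |S| = |Hf|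
  have hScard : S.card = Hf.card := by
    rw [hSdef, vbls]
    apply Finset.card_image_of_injOn
    intro e1 h1 e2 h2 hsnd
    exact Prod.ext (by rw [hHfF e1 h1, hHfF e2 h2]) hsnd
  have hτS : τ ≤ S.card := hScard ▸ hdeg
  -- Hf is nonempty
  have hHfne : Hf.Nonempty := Finset.card_pos.1 (by omega)
  -- f ∈ consOf (Hf ∪ H)
  have hfU : f ∈ consOf (Hf ∪ H) := by
    obtain ⟨e, he⟩ := hHfne
    exact mem_consOf'.2 ⟨e, Finset.mem_union_left _ he, hHfF e he⟩
  -- Part 2 : IsTau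
  have hUtau : IsTau τ (Hf ∪ H) := by
    intro g hg
    by_cases hgf : g = f
    · subst hgf; rw [hdegCf]; exact hdeg
    · have hfil : (Hf ∪ H).filter (fun e => e.1 = g) = H.filter (fun e => e.1 = g) := by
        ext e
        simp only [Finset.mem_filter, Finset.mem_union]
        constructor
        · rintro ⟨h1 | h1, h2⟩
          · exact absurd (h2.symm.trans (hHfF e h1)) hgf
          · exact ⟨h1, h2⟩
        · rintro ⟨h1, h2⟩; exact ⟨Or.inr h1, h2⟩
      have hgH : g ∈ consOf H := by
        obtain ⟨e, he, h1⟩ := mem_consOf'.1 hg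
        rcases Finset.mem_union.1 he with h | h
        · exact absurd (h1.symm.trans (hHfF e h)) hgf
        · exact mem_consOf'.2 ⟨e, h, h1⟩
      have := hHtau g hgH
      rw [degC, hfil]; exact this
  -- Part 3 : constraint count
  have hconsU : consOf (Hf ∪ H) ⊆ insert f (consOf H) := by
    intro g hg
    obtain ⟨e, he, h1⟩ := mem_consOf'.1 hg
    rcases Finset.mem_union.1 he with h | h
    · exact Finset.mem_insert.2 (Or.inl (h1.symm.trans (hHfF e h)))
    · exact Finset.mem_insert.2 (Or.inr (mem_consOf'.2 ⟨e, h, h1⟩))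
  have hcard : (consOf (Hf ∪ H)).card ≤ 2 * SMALL := by
    have h1 := Finset.card_le_card hconsU
    have h2 := Finset.card_insert_le f (consOf H)
    omega
  -- Part 4 : leaves ⊆ S
  have hleavesS : leaves (Hf ∪ H) ⊆ S := by
    intro v hv
    obtain ⟨hvv, hd⟩ := Finset.mem_filter.1 hv
    by_cases hvS : v ∈ S
    · exact hvS
    · exfalso
      have hvHf : v ∉ vbls Hf := by rwa [hSdef] at hvS
      have hvH : v ∈ vbls H := by
        obtain ⟨e, he, h2⟩ := mem_vbls'.1 hvv
        rcases Finset.mem_union.1 he with h | h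
        · exact absurd (mem_vbls'.2 ⟨e, h, h2⟩) hvHf
        · exact mem_vbls'.2 ⟨e, h, h2⟩
      have hle : degV H v ≤ degV (Hf ∪ H) v :=
        Finset.card_le_card (Finset.filter_subset_filter _ Finset.subset_union_right)
      have hpos := degV_pos_of_mem hvH
      have h1 : degV H v = 1 := by omega
      exact hvS (hHclosed.2 (Finset.mem_filter.2 ⟨hvH, h1⟩))
  -- Part 5 : leaves nonempty
  have hleavesNE : (leaves (Hf ∪ H)).Nonempty := by
    by_contra hne
    have hL : leaves (Hf ∪ H) = ∅ := Finset.not_nonempty_iff_eq_empty.1 hne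
    have hUe : Hf ∪ H = ∅ := empty_of_no_leaves τ SMALL ζ hζ0 E hPA _ hUE hUtau hcard hL
    obtain ⟨e, he⟩ := hHfne
    exact absurd (hUe ▸ Finset.mem_union_left H he) (Finset.notMem_empty e)
  -- Part 1
  have hUne : Hf ∪ H ≠ ∅ := by
    obtain ⟨e, he⟩ := hHfne
    intro h
    exact absurd (h ▸ Finset.mem_union_left H he) (Finset.notMem_empty e)
  refine ⟨hUne, hUtau, hcard, hleavesNE, hleavesS, ?_⟩
  -- Part 6 : revenue bound
  -- the extra edge
  obtain ⟨e₀, he₀H, he₀Hf⟩ := Finset.not_subset.1 hHnot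
  have he₀f : e₀.1 ≠ f := fun h => he₀Hf (hHfmem e₀ (hHE he₀H) h)
  by_cases hB : ∀ v ∈ S, degV (Hf ∪ H) v = 1
  · -- Case B: all of S are leaves; derive a contradiction via plausibility
    exfalso
    set W := (Hf ∪ H).filter (fun e => e.1 ≠ f) with hW
    have hWU : W ⊆ Hf ∪ H := Finset.filter_subset _ _
    have hWE : W ⊆ E := hWU.trans hUE
    have hWf : ∀ e ∈ W, e.1 ≠ f := fun e he => (Finset.mem_filter.1 he).2
    have hWtau : IsTau τ W := by
      intro g hg
      obtain ⟨e, he, h1⟩ := mem_consOf'.1 hg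
      have hgf : g ≠ f := h1 ▸ hWf e he
      have hfil : W.filter (fun e => e.1 = g) = (Hf ∪ H).filter (fun e => e.1 = g) := by
        ext a
        simp only [hW, Finset.mem_filter, and_assoc]
        constructor
        · rintro ⟨h1, _, h3⟩; exact ⟨h1, h3⟩
        · rintro ⟨h1, h3⟩; exact ⟨h1, h3 ▸ hgf, h3⟩
      have hgU : g ∈ consOf (Hf ∪ H) := mem_consOf'.2 ⟨e, hWU he, h1⟩
      have := hUtau g hgU
      rw [degC, hfil]; exact this
    have hWcard : (consOf W).card ≤ 2 * SMALL := by
      have : consOf W ⊆ consOf (Hf ∪ H) := Finset.image_subset_image hWU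
      have := Finset.card_le_card this
      omega
    have hWL : leaves W = ∅ := by
      rw [Finset.eq_empty_iff_forall_notMem]
      intro v hv
      obtain ⟨hvv, hd⟩ := Finset.mem_filter.1 hv
      by_cases hvS : v ∈ S
      · -- v ∈ S : degV (Hf∪H) v = 1 but the single edge is in Hf, not in W
        have h1 : degV (Hf ∪ H) v = 1 := hB v hvS
        have hvHf : v ∈ vbls Hf := hSdef ▸ hvS
        obtain ⟨e, he, h2⟩ := mem_vbls'.1 hvHf
        have heU : e ∈ (Hf ∪ H).filter (fun a => a.2 = v) :=
          Finset.mem_filter.2 ⟨Finset.mem_union_left _ he, h2⟩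
        have heW : e ∉ W.filter (fun a => a.2 = v) := by
          intro h
          exact (hWf e (Finset.mem_filter.1 h).1) (hHfF e he)
        have hss : W.filter (fun a => a.2 = v) ⊂ (Hf ∪ H).filter (fun a => a.2 = v) :=
          Finset.ssubset_iff_of_subset
            (Finset.filter_subset_filter _ hWU) |>.2 ⟨e, heU, heW⟩
        have hlt : degV W v < degV (Hf ∪ H) v := Finset.card_lt_card hss
        omega
      · -- v ∉ S : degV W v = degV (Hf∪H) v, so v would be a leaf of Hf∪H, hence in S
        have hfil : W.filter (fun a => a.2 = v) = (Hf ∪ H).filter (fun a => a.2 = v) := by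
          ext a
          simp only [hW, Finset.mem_filter, and_assoc]
          constructor
          · rintro ⟨h1, _, h3⟩; exact ⟨h1, h3⟩
          · rintro ⟨h1, h3⟩
            refine ⟨h1, ?_, h3⟩
            intro haf
            have haHf : a ∈ Hf := by
              rcases Finset.mem_union.1 h1 with h | h
              · exact h
              · exact hHfmem a (hHE h) haf
            exact hvS (hSdef ▸ mem_vbls'.2 ⟨a, haHf, h3⟩)
        have hdU : degV (Hf ∪ H) v = 1 := by
          have : degV W v = degV (Hf ∪ H) v := by
            show (W.filter fun a => a.2 = v).card = ((Hf ∪ H).filter fun a => a.2 = v).card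
            rw [hfil]
          omega
        have hvU : v ∈ vbls (Hf ∪ H) := by
          obtain ⟨e, he, h2⟩ := mem_vbls'.1 hvv
          exact mem_vbls'.2 ⟨e, hWU he, h2⟩
        exact hvS (hleavesS (Finset.mem_filter.2 ⟨hvU, hdU⟩))
    have hWe : W = ∅ := empty_of_no_leaves τ SMALL ζ hζ0 E hPA W hWE hWtau hWcard hWL
    have : e₀ ∈ W := Finset.mem_filter.2 ⟨Finset.mem_union_right _ he₀H, he₀f⟩
    rw [hWe] at this
    exact Finset.notMem_empty e₀ this
  · -- Case A: some vertex of S is not a leaf, so #leaves ≤ |S| - 1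
    push_neg at hB
    obtain ⟨v₀, hv₀S, hv₀d⟩ := hB
    have hLsub : leaves (Hf ∪ H) ⊆ S.erase v₀ := by
      intro v hv
      have hvS := hleavesS hv
      have hd := (Finset.mem_filter.1 hv).2
      refine Finset.mem_erase.2 ⟨?_, hvS⟩
      intro h; exact hv₀d (h ▸ hd)
    have hLcard : (leaves (Hf ∪ H)).card ≤ S.card - 1 := by
      have := Finset.card_le_card hLsub
      rw [Finset.card_erase_of_mem hv₀S] at this
      exact this
    -- excess at f
    have hNge : S.card - τ ≤
        (∑ v ∈ vbls (Hf ∪ H), (degV (Hf ∪ H) v - 2)) +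
          ∑ g ∈ consOf (Hf ∪ H), (degC (Hf ∪ H) g - τ) := by
      have h1 : degC (Hf ∪ H) f - τ ≤ ∑ g ∈ consOf (Hf ∪ H), (degC (Hf ∪ H) g - τ) :=
        Finset.single_le_sum (f := fun g => degC (Hf ∪ H) g - τ) (fun i _ => Nat.zero_le _) hfU
      rw [hdegCf, ← hScard] at h1
      omega
    rw [revenue]
    have hL1 : ((leaves (Hf ∪ H)).card : ℝ) ≤ (S.card : ℝ) - 1 := by
      have h1 : 1 ≤ S.card := by omega
      have h2 : ((leaves (Hf ∪ H)).card : ℝ) ≤ ((S.card - 1 : ℕ) : ℝ) := Nat.cast_le.2 hLcard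
      rwa [Nat.cast_sub h1, Nat.cast_one] at h2
    have hN1 : (S.card : ℝ) - (τ : ℝ) ≤
        (((∑ v ∈ vbls (Hf ∪ H), (degV (Hf ∪ H) v - 2)) +
          ∑ g ∈ consOf (Hf ∪ H), (degC (Hf ∪ H) g - τ) : ℕ) : ℝ) := by
      have := hNge
      have h2 : ((S.card - τ : ℕ) : ℝ) = (S.card : ℝ) - τ := by
        push_cast [Nat.cast_sub hτS]; ring
      calc (S.card : ℝ) - (τ : ℝ) = ((S.card - τ : ℕ) : ℝ) := h2.symm
        _ ≤ _ := by exact_mod_cast this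
    linarith
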